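/- Let P_1,…,P_ℓ be vertex-disjoint induced paths of a finite simple block graph G, each equipped with an orientation φ_i. Then the directed multigraph K_{P_ind} has no loops and no repeated arcs, i.e., K_{P_ind} is a simple directed graph. -/

import Mathlib

open SimpleGraph

/-- An induced path in a simple graph `G`: a walk which is a path and such that the
subgraph of `G` induced on its vertex set equals the path. -/
structure InducedPath {V : Type*} (G : SimpleGraph V) where
  first : V
  last : V
  walk : G.Walk first last
  isPath : walk.IsPath
  induced : ∀ x ∈ walk.support, ∀ y ∈ walk.support, G.Adj x y → s(x, y) ∈ walk.edges

namespace InducedPath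

variable {V : Type*} {G : SimpleGraph V}

/-- The vertex set of an induced path. -/
def vertexSet (P : InducedPath G) : Set V := {v | v ∈ P.walk.support}

/-- The edge set of an induced path. -/
def edgeSet (P : InducedPath G) : Set (Sym2 V) := {e | e ∈ P.walk.edges}

/-- The terminal vertices `∂P` of an induced path. -/
def boundary (P : InducedPath G) : Set V := {P.first, P.last}

/-- The internal vertices `P°` of an induced path. -/
def interior (P : InducedPath G) : Set V := P.vertexSet \ P.boundary

end InducedPath

section FamilyDefs

variable {V : Type*} (G : SimpleGraph V) {ℓ : ℕ}

/-- `Q` contains `P` as a subgraph. -/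
def PathContains (Q P : InducedPath G) : Prop :=
  P.vertexSet ⊆ Q.vertexSet ∧ P.edgeSet ⊆ Q.edgeSet

/-- The vertex set of `P_ind`, the induced subgraph on `⋃ i, V(P i)`. -/
def famVerts (P : Fin ℓ → InducedPath G) : Set V := ⋃ i, (P i).vertexSet

/-- The union of the edge sets of the paths `P i`. -/
def famEdges (P : Fin ℓ → InducedPath G) : Set (Sym2 V) := ⋃ i, (P i).edgeSet

/-- The paths `P i` are pairwise vertex-disjoint. -/
def PairwiseVertexDisjoint (P : Fin ℓ → InducedPath G) : Prop :=
  ∀ i j : Fin ℓ, i ≠ j → Disjoint (P i).vertexSet (P j).vertexSet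

/-- `φ` is an orientation of the induced path `P`, i.e. a surjection `{1,2} → ∂P`. -/
def IsOrientation (P : InducedPath G) (φ : Fin 2 → V) : Prop :=
  Set.range φ = P.boundary

/-- `Q` is an induced path of `P_ind` (equivalently, an induced path of `G` all of whose
vertices belong to `⋃ i, V(P i)`). -/
def IsPathOfInd (P : Fin ℓ → InducedPath G) (Q : InducedPath G) : Prop :=
  Q.vertexSet ⊆ famVerts G P

/-- The data `(P, σ, φ)` is DOIP. -/
def IsDOIPData (P : Fin ℓ → InducedPath G) (σ : Equiv.Perm (Fin ℓ))
    (φ : Fin ℓ → Fin 2 → V) : Prop :=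
  (∀ i, IsOrientation G (P i) (φ i)) ∧
    ∀ i j : Fin ℓ, σ i ≤ σ j → ∀ Q : InducedPath G, IsPathOfInd G P Q →
      ({Q.first, Q.last} : Set V) = {φ (σ i) 0, φ (σ j) 1} →
      ∃ k, PathContains G Q (P k)

/-- The family `P` is DOIP: there exist `σ` and orientations making it DOIP. -/
def FamilyDOIP (P : Fin ℓ → InducedPath G) : Prop :=
  ∃ (σ : Equiv.Perm (Fin ℓ)) (φ : Fin ℓ → Fin 2 → V), IsDOIPData G P σ φ

/-- `Q` realizes an arc `(i,j)` of the directed multigraph `K_{P_ind}`. -/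
def KArcWitness (P : Fin ℓ → InducedPath G) (φ : Fin ℓ → Fin 2 → V) (i j : Fin ℓ)
    (Q : InducedPath G) : Prop :=
  IsPathOfInd G P Q ∧ ({Q.first, Q.last} : Set V) = {φ i 0, φ j 1} ∧
    ∀ k, ¬ PathContains G Q (P k)

/-- `(i,j)` is an arc of `K_{P_ind}`. -/
def KArc (P : Fin ℓ → InducedPath G) (φ : Fin ℓ → Fin 2 → V) (i j : Fin ℓ) : Prop :=
  ∃ Q : InducedPath G, KArcWitness G P φ i j Q

/-- The directed multigraph `K_{P_ind}` is directed acyclic (no loops and no directed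
cycles). -/
def KAcyclic (P : Fin ℓ → InducedPath G) (φ : Fin ℓ → Fin 2 → V) : Prop :=
  ∀ i : Fin ℓ, ¬ Relation.TransGen (KArc G P φ) i i

/-- `Q` is a strand of `P_ind` from `P i` to `P j`. -/
def IsStrand (P : Fin ℓ → InducedPath G) (φ : Fin ℓ → Fin 2 → V) (i j : Fin ℓ)
    (Q : InducedPath G) : Prop :=
  i ≠ j ∧ IsPathOfInd G P Q ∧ Q.first ≠ φ i 1 ∧ Q.last ≠ φ j 0 ∧
    Q.vertexSet ∩ (P i).vertexSet = {Q.first} ∧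
    Q.vertexSet ∩ (P j).vertexSet = {Q.last} ∧
    ∀ k, ¬ PathContains G Q (P k)

/-- `Q` is an internal strand of `P_ind` from `P i` to `P j`. -/
def IsInternalStrand (P : Fin ℓ → InducedPath G) (i j : Fin ℓ) (Q : InducedPath G) : Prop :=
  i ≠ j ∧ IsPathOfInd G P Q ∧
    Q.first ∈ (P i).interior ∧ Q.last ∈ (P j).interior ∧
    Q.vertexSet ∩ (P i).vertexSet = {Q.first} ∧
    Q.vertexSet ∩ (P j).vertexSet = {Q.last} ∧
    ∀ k, ¬ PathContains G Q (P k)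

/-- `(Q, b, c)` is an internal fork of `P_ind` from `P i` to `P j`. -/
def IsInternalFork (P : Fin ℓ → InducedPath G) (i j : Fin ℓ) (Q : InducedPath G)
    (b c : V) : Prop :=
  i ≠ j ∧ IsPathOfInd G P Q ∧ Q.first ∈ (P i).interior ∧
    Q.vertexSet ∩ (P i).vertexSet = {Q.first} ∧
    Q.vertexSet ∩ (P j).vertexSet = ∅ ∧
    b ∈ (P j).vertexSet ∧ c ∈ (P j).vertexSet ∧ b ≠ c ∧
    G.Adj Q.last b ∧ G.Adj Q.last c ∧
    ∀ k, ¬ PathContains G Q (P k)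

/-- `(Q, a, b, c, d)` is a double fork of `P_ind` from `P i` to `P j`. -/
def IsDoubleFork (P : Fin ℓ → InducedPath G) (i j : Fin ℓ) (Q : InducedPath G)
    (a b c d : V) : Prop :=
  i ≠ j ∧ IsPathOfInd G P Q ∧
    Q.vertexSet ∩ (P i).vertexSet = ∅ ∧
    Q.vertexSet ∩ (P j).vertexSet = ∅ ∧
    a ∈ (P i).vertexSet ∧ b ∈ (P i).vertexSet ∧ a ≠ b ∧
    c ∈ (P j).vertexSet ∧ d ∈ (P j).vertexSet ∧ c ≠ d ∧
    G.Adj Q.first a ∧ G.Adj Q.first b ∧ G.Adj Q.last c ∧ G.Adj Q.last d ∧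
    ∀ k, ¬ PathContains G Q (P k)

/-- `(a, b, c, d)` is a complete ladder of `P_ind` between `P i` and `P j`. -/
def IsCompleteLadder (P : Fin ℓ → InducedPath G) (i j : Fin ℓ) (a b c d : V) : Prop :=
  i ≠ j ∧ a ∈ (P i).vertexSet ∧ b ∈ (P i).vertexSet ∧ a ≠ b ∧
    c ∈ (P j).vertexSet ∧ d ∈ (P j).vertexSet ∧ c ≠ d ∧
    G.Adj a b ∧ G.Adj a c ∧ G.Adj a d ∧ G.Adj b c ∧ G.Adj b d ∧ G.Adj c d

/-- `P_ind` contains an internal strand, an internal fork, a double fork, or a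
complete ladder. -/
def HasForbidden (P : Fin ℓ → InducedPath G) : Prop :=
  (∃ i j Q, IsInternalStrand G P i j Q) ∨
  (∃ i j Q b c, IsInternalFork G P i j Q b c) ∨
  (∃ i j Q a b c d, IsDoubleFork G P i j Q a b c d) ∨
  (∃ i j a b c d, IsCompleteLadder G P i j a b c d)

/-- `P_ind` contains a complete ladder, or an internal strand, internal fork, or double
fork which is edge-disjoint from the family `P`. -/
def HasForbiddenEdgeDisjoint (P : Fin ℓ → InducedPath G) : Prop :=
  (∃ i j Q, IsInternalStrand G P i j Q ∧ Disjoint Q.edgeSet (famEdges G P)) ∨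
  (∃ i j Q b c, IsInternalFork G P i j Q b c ∧
    Disjoint (Q.edgeSet ∪ {s(Q.last, b), s(Q.last, c)}) (famEdges G P)) ∨
  (∃ i j Q a b c d, IsDoubleFork G P i j Q a b c d ∧
    Disjoint (Q.edgeSet ∪ {s(Q.first, a), s(Q.first, b), s(Q.last, c), s(Q.last, d)})
      (famEdges G P)) ∨
  (∃ i j a b c d, IsCompleteLadder G P i j a b c d)

end FamilyDefs

section Invariants

variable {V : Type*}

/-- The invariant `ν(G)`: the maximal total number of edges of a family of
vertex-disjoint induced paths of `G` which is DOIP. -/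
noncomputable def nu (G : SimpleGraph V) : ℕ :=
  sSup {n : ℕ | ∃ (ℓ : ℕ) (P : Fin ℓ → InducedPath G),
    PairwiseVertexDisjoint G P ∧ FamilyDOIP G P ∧ n = ∑ i, (P i).walk.length}

/-- `ℓ(G)`: the number of edges of a longest induced path of `G`. -/
noncomputable def longestInducedPathLength (G : SimpleGraph V) : ℕ :=
  sSup {n : ℕ | ∃ P : InducedPath G, n = P.walk.length}

end Invariants

section BlockGraphs

variable {V : Type*} {G : SimpleGraph V}

/-- A subgraph is biconnected if it is connected and remains connected after
deleting any single vertex. -/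
def SubgraphBiconnected (H : G.Subgraph) : Prop :=
  H.coe.Connected ∧ ∀ v : V, ((H.deleteVerts {v}).coe).Connected

/-- A block of `G` is a maximal biconnected subgraph. -/
def IsBlock (H : G.Subgraph) : Prop :=
  SubgraphBiconnected H ∧ ∀ H' : G.Subgraph, SubgraphBiconnected H' → H ≤ H' → H' = H

/-- `G` is a block graph if every block of `G` is a complete graph. -/
def IsBlockGraph (G : SimpleGraph V) : Prop :=
  ∀ H : G.Subgraph, IsBlock H → ∀ a ∈ H.verts, ∀ b ∈ H.verts, a ≠ b → H.Adj a b

/-- The intersection `Q ∩ R` of two induced paths, as a subgraph of `G`. -/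
def pathsInter (Q R : InducedPath G) : G.Subgraph where
  verts := Q.vertexSet ∩ R.vertexSet
  Adj a b := G.Adj a b ∧ s(a, b) ∈ Q.walk.edges ∧ s(a, b) ∈ R.walk.edges
  adj_sub h := h.1
  edge_vert h := ⟨Q.walk.fst_mem_support_of_mem_edges h.2.1,
    R.walk.fst_mem_support_of_mem_edges h.2.2⟩
  symm := by
    constructor
    intro a b h
    refine ⟨h.1.symm, ?_, ?_⟩
    · rw [Sym2.eq_swap]; exact h.2.1
    · rw [Sym2.eq_swap]; exact h.2.2

/-- `s` is a maximal clique of `G`. -/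
def IsMaxClique (G : SimpleGraph V) (s : Set V) : Prop :=
  G.IsClique s ∧ ∀ t : Set V, G.IsClique t → s ⊆ t → s = t

/-- `G` has the two-block property: every vertex belongs to at most two maximal
cliques. -/
def TwoBlockProperty (G : SimpleGraph V) : Prop :=
  ∀ v : V, ({s : Set V | IsMaxClique G s ∧ v ∈ s}).ncard ≤ 2

/-- The completion `G_c` of `G` at the vertex `c`. -/
def completionAt (G : SimpleGraph V) (c : V) : SimpleGraph V where
  Adj u w := G.Adj u w ∨ (u ≠ w ∧ G.Adj c u ∧ G.Adj c w)
  symm := by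
    constructor
    intro u w h
    rcases h with h | ⟨hne, h1, h2⟩
    · exact Or.inl h.symm
    · exact Or.inr ⟨hne.symm, h2, h1⟩
  loopless := by
    constructor
    intro u h
    rcases h with h | ⟨hne, _, _⟩
    · first | exact G.loopless.irrefl u h | exact G.irrefl h
    · exact hne rfl

/-- The number of connected components of a graph. -/
noncomputable def numComponents (G : SimpleGraph V) : ℕ :=
  Nat.card G.ConnectedComponent

/-- `c` is a cut vertex of `G`: deleting it strictly increases the number of
connected components. -/
def IsCutVertex (G : SimpleGraph V) (c : V) : Prop :=
  numComponents G < numComponents (G.induce ({c}ᶜ : Set V))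

end BlockGraphs


section AuxProof

open SimpleGraph Walk

variable {V : Type*} {G : SimpleGraph V}

private lemma subgraph_finite [Finite V] : Finite G.Subgraph := by
  classical
  exact Finite.of_injective (fun H => (H.verts, H.Adj))
    (fun H H' h => by
      obtain ⟨h1, h2⟩ := Prod.mk.injEq _ _ _ _ ▸ h
      exact SimpleGraph.Subgraph.ext h1 h2)

private lemma exists_block_ge [Finite V] {H : G.Subgraph} (hH : SubgraphBiconnected H) :
    ∃ B : G.Subgraph, IsBlock B ∧ H ≤ B := by
  have : Finite G.Subgraph := subgraph_finite
  obtain ⟨B, hBmem, hBmax⟩ := Set.Finite.exists_maximalFor id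
    {H' : G.Subgraph | SubgraphBiconnected H' ∧ H ≤ H'} (Set.toFinite _) ⟨H, hH, le_rfl⟩
  exact ⟨B, ⟨hBmem.1, fun H' hH' hle => le_antisymm (hBmax ⟨hH', hBmem.2.trans hle⟩ hle) hle⟩, hBmem.2⟩

private lemma cycle_biconnected [DecidableEq V] {a : V} (C : G.Walk a a) (hC : C.IsCycle) :
    SubgraphBiconnected C.toSubgraph := by
  refine ⟨(C.toSubgraph_connected).coe, fun v => ?_⟩
  by_cases hv : v ∈ C.support
  · rw [← C.toSubgraph_rotate hv]
    have hcyc : (C.rotate v hv).IsCycle := hC.rotate hv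
    generalize hD : C.rotate v hv = D at hcyc ⊢
    clear hD
    cases D with
    | nil => exact absurd rfl hcyc.ne_nil
    | @cons _ w _ h q =>
      rw [Walk.cons_isCycle_iff] at hcyc
      obtain ⟨hq, -⟩ := hcyc
      have hvw : v ≠ w := h.ne
      obtain ⟨u, h₂, r, hr⟩ := Walk.exists_eq_cons_of_ne hvw q.reverse
      have hqrev : q.reverse.support.Nodup := hq.reverse.support_nodup
      rw [hr, Walk.support_cons] at hqrev
      have hvnr : v ∉ r.support := (List.nodup_cons.mp hqrev).1
      have hrq : ∀ x ∈ r.support, x ∈ q.support := by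
        intro x hx
        have : x ∈ q.reverse.support := by rw [hr, Walk.support_cons]; exact List.mem_cons_of_mem _ hx
        rwa [Walk.support_reverse, List.mem_reverse] at this
      have hre : ∀ e ∈ r.edges, e ∈ q.edges := by
        intro e he
        have : e ∈ q.reverse.edges := by rw [hr, Walk.edges_cons]; exact List.mem_cons_of_mem _ he
        rwa [Walk.edges_reverse, List.mem_reverse] at this
      have hle : r.toSubgraph ≤ (Walk.cons h q).toSubgraph.deleteVerts {v} := by
        constructor
        · intro x hx
          rw [Walk.mem_verts_toSubgraph] at hx
          refine ⟨?_, ?_⟩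
          · rw [Walk.mem_verts_toSubgraph, Walk.support_cons]
            exact List.mem_cons_of_mem _ (hrq x hx)
          · intro hxv
            rw [Set.mem_singleton_iff] at hxv
            exact hvnr (hxv ▸ hx)
        · intro x y hxy
          have hx : x ∈ r.toSubgraph.verts := r.toSubgraph.edge_vert hxy
          have hy : y ∈ r.toSubgraph.verts := r.toSubgraph.edge_vert hxy.symm
          rw [Walk.mem_verts_toSubgraph] at hx hy
          have he : s(x, y) ∈ r.edges := by
            rw [← Walk.mem_edges_toSubgraph, Subgraph.mem_edgeSet]; exact hxy
          have he' : s(x, y) ∈ (Walk.cons h q).edges := by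
            rw [Walk.edges_cons]; exact List.mem_cons_of_mem _ (hre _ he)
          rw [Subgraph.deleteVerts_adj]
          refine ⟨?_, ?_, ?_, ?_, ?_⟩
          · rw [Walk.mem_verts_toSubgraph, Walk.support_cons]
            exact List.mem_cons_of_mem _ (hrq x hx)
          · exact fun hxv => hvnr (Set.mem_singleton_iff.mp hxv ▸ hx)
          · rw [Walk.mem_verts_toSubgraph, Walk.support_cons]
            exact List.mem_cons_of_mem _ (hrq y hy)
          · exact fun hyv => hvnr (Set.mem_singleton_iff.mp hyv ▸ hy)
          · rw [← Subgraph.mem_edgeSet, Walk.mem_edges_toSubgraph]; exact he'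
      have hverts : r.toSubgraph.verts = ((Walk.cons h q).toSubgraph.deleteVerts {v}).verts := by
        ext x
        rw [Subgraph.deleteVerts_verts, Walk.verts_toSubgraph]
        simp only [Set.mem_diff, Set.mem_setOf_eq, Set.mem_singleton_iff,
          Walk.mem_verts_toSubgraph, Walk.support_cons, List.mem_cons]
        constructor
        · intro hx
          exact ⟨Or.inr (hrq x hx), fun hxv => hvnr (hxv ▸ hx)⟩
        · rintro ⟨hx | hx, hxv⟩
          · exact absurd hx hxv
          · -- x ∈ q.support, x ≠ v ⇒ x ∈ r.support
            have : x ∈ q.reverse.support := by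
              rw [Walk.support_reverse, List.mem_reverse]; exact hx
            rw [hr, Walk.support_cons, List.mem_cons] at this
            rcases this with h' | h'
            · exact absurd h' hxv
            · exact h'
      exact (Subgraph.Connected.mono hle hverts (r.toSubgraph_connected)).coe
  · -- v not in the support: deleting it changes nothing
    have hvv : v ∉ C.toSubgraph.verts := by rwa [Walk.mem_verts_toSubgraph]
    have hle : C.toSubgraph ≤ C.toSubgraph.deleteVerts {v} := by
      constructor
      · intro x hx
        exact ⟨hx, fun hxv => hvv ((Set.mem_singleton_iff.mp hxv) ▸ hx)⟩
      · intro x y hxy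
        rw [Subgraph.deleteVerts_adj]
        have hx := C.toSubgraph.edge_vert hxy
        have hy := C.toSubgraph.edge_vert hxy.symm
        exact ⟨hx, fun h' => hvv (Set.mem_singleton_iff.mp h' ▸ hx),
          hy, fun h' => hvv (Set.mem_singleton_iff.mp h' ▸ hy), hxy⟩
    have hverts : C.toSubgraph.verts = (C.toSubgraph.deleteVerts {v}).verts := by
      rw [Subgraph.deleteVerts_verts]
      ext x
      simp only [Set.mem_diff, Set.mem_singleton_iff]
      exact ⟨fun hx => ⟨hx, fun h' => hvv (h' ▸ hx)⟩, fun h' => h'.1⟩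
    exact (Subgraph.Connected.mono hle hverts C.toSubgraph_connected).coe

private lemma cycle_clique [Finite V] [DecidableEq V] (hBG : IsBlockGraph G) {a : V}
    (C : G.Walk a a) (hC : C.IsCycle) :
    ∀ x ∈ C.support, ∀ y ∈ C.support, x ≠ y → G.Adj x y := by
  obtain ⟨B, hB, hle⟩ := exists_block_ge (cycle_biconnected C hC)
  intro x hx y hy hxy
  exact B.adj_sub (hBG B hB x (hle.1 ((Walk.mem_verts_toSubgraph C).mpr hx))
    y (hle.1 ((Walk.mem_verts_toSubgraph C).mpr hy)) hxy)

private lemma adj_of_two_disjoint_paths [Finite V] [DecidableEq V] (hBG : IsBlockGraph G)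
    {a c : V} (hac : a ≠ c) (p q : G.Walk a c) (hp : p.IsPath) (hq : q.IsPath)
    (hdisj : ∀ v, v ∈ p.support → v ∈ q.support → v = a ∨ v = c) :
    G.Adj a c := by
  by_contra hadj
  have hC : (p.append q.reverse).IsCycle := by
    rw [Walk.isCycle_def]
    refine ⟨⟨?_⟩, ?_, ?_⟩
    · rw [Walk.edges_append]
      refine List.Nodup.append hp.edges_nodup hq.reverse.edges_nodup ?_
      intro e hep heq
      have heq' : e ∈ q.edges := by rwa [Walk.edges_reverse, List.mem_reverse] at heq
      induction e with
      | h x y =>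
        have hxy : G.Adj x y := p.adj_of_mem_edges hep
        have hx1 := p.fst_mem_support_of_mem_edges hep
        have hy1 := p.snd_mem_support_of_mem_edges hep
        have hx2 := q.fst_mem_support_of_mem_edges heq'
        have hy2 := q.snd_mem_support_of_mem_edges heq'
        rcases hdisj x hx1 hx2 with rfl | rfl <;> rcases hdisj y hy1 hy2 with rfl | rfl
        · exact hxy.ne rfl
        · exact hadj hxy
        · exact hadj hxy.symm
        · exact hxy.ne rfl
    · intro hn
      have h1 : 0 < p.length := by
        rw [← Walk.not_nil_iff_lt_length]
        exact Walk.not_nil_of_ne hac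
      have := congrArg Walk.length hn
      rw [Walk.length_append] at this
      simp only [Walk.length_nil] at this
      omega
    · rw [Walk.tail_support_append]
      have hpn : p.support = a :: p.support.tail := p.support_eq_cons
      have hqn : q.reverse.support = c :: q.reverse.support.tail := q.reverse.support_eq_cons
      have hpt : p.support.tail.Nodup := by
        have := hp.support_nodup
        rw [hpn] at this
        exact (List.nodup_cons.mp this).2
      have hqt : q.reverse.support.tail.Nodup := by
        have := hq.reverse.support_nodup
        rw [hqn] at this
        exact (List.nodup_cons.mp this).2
      have hcq : c ∉ q.reverse.support.tail := by
        have := hq.reverse.support_nodup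
        rw [hqn] at this
        exact (List.nodup_cons.mp this).1
      have hap : a ∉ p.support.tail := by
        have := hp.support_nodup
        rw [hpn] at this
        exact (List.nodup_cons.mp this).1
      refine List.Nodup.append hpt hqt ?_
      intro x hx1 hx2
      have hxp : x ∈ p.support := by rw [hpn]; exact List.mem_cons_of_mem _ hx1
      have hxq : x ∈ q.support := by
        have : x ∈ q.reverse.support := by rw [hqn]; exact List.mem_cons_of_mem _ hx2
        rwa [Walk.support_reverse, List.mem_reverse] at this
      rcases hdisj x hxp hxq with rfl | rfl
      · exact hap hx1
      · exact hcq hx2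
  have hmem_a : a ∈ (p.append q.reverse).support := Walk.start_mem_support _
  have hmem_c : c ∈ (p.append q.reverse).support := by
    rw [Walk.mem_support_append_iff]
    exact Or.inl p.end_mem_support
  exact hadj (cycle_clique hBG _ hC a hmem_a c hmem_c hac)

private lemma exists_first_meet {x b : V} (p : G.Walk x b) (S : V → Prop) (hb : S b) :
    ∃ (c : V) (r : G.Walk x c), S c ∧ (∀ v ∈ r.support, v ≠ c → ¬ S v) ∧
      (∀ v ∈ r.support, v ∈ p.support) ∧ (p.IsPath → r.IsPath) := by
  classical
  induction p with
  | nil =>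
    exact ⟨_, Walk.nil, hb, fun v hv hvc => absurd (by simpa using hv) hvc,
      fun v hv => hv, fun _ => Walk.IsPath.nil⟩
  | @cons u w b' h p ih =>
    by_cases hS : S u
    · exact ⟨u, Walk.nil, hS, fun v hv hvc => absurd (by simpa using hv) hvc,
        fun v hv => by simpa using Or.inl (by simpa using hv), fun _ => Walk.IsPath.nil⟩
    · obtain ⟨c, r, h1, h2, h3, h4⟩ := ih hb
      refine ⟨c, Walk.cons h r, h1, ?_, ?_, ?_⟩
      · intro v hv hvc
        rw [Walk.support_cons, List.mem_cons] at hv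
        rcases hv with rfl | hv
        · exact hS
        · exact h2 v hv hvc
      · intro v hv
        rw [Walk.support_cons, List.mem_cons] at hv ⊢
        rcases hv with rfl | hv
        · exact Or.inl rfl
        · exact Or.inr (h3 v hv)
      · intro hP
        rw [Walk.cons_isPath_iff] at hP ⊢
        exact ⟨h4 hP.1, fun hu => hP.2 (h3 u hu)⟩

private lemma induced_tail {a x b : V} (h : G.Adj a x) (p' : G.Walk x b)
    (hp : (Walk.cons h p').IsPath)
    (hip : ∀ u ∈ (Walk.cons h p').support, ∀ v ∈ (Walk.cons h p').support,
      G.Adj u v → s(u, v) ∈ (Walk.cons h p').edges) :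
    ∀ u ∈ p'.support, ∀ v ∈ p'.support, G.Adj u v → s(u, v) ∈ p'.edges := by
  intro u hu v hv huv
  have hmem := hip u (by rw [Walk.support_cons]; exact List.mem_cons_of_mem _ hu)
    v (by rw [Walk.support_cons]; exact List.mem_cons_of_mem _ hv) huv
  rw [Walk.edges_cons, List.mem_cons] at hmem
  rcases hmem with heq | h'
  · exfalso
    have ha : a ∉ p'.support := (Walk.cons_isPath_iff h p').mp hp |>.2
    rw [Sym2.eq_iff] at heq
    rcases heq with ⟨rfl, rfl⟩ | ⟨rfl, rfl⟩
    · exact ha hu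
    · exact ha hv
  · exact h'

private lemma induced_support_unique [Finite V] [DecidableEq V] (hBG : IsBlockGraph G) :
    ∀ (n : ℕ) {a b : V} (p q : G.Walk a b), p.length ≤ n → p.IsPath → q.IsPath →
    (∀ x ∈ p.support, ∀ y ∈ p.support, G.Adj x y → s(x, y) ∈ p.edges) →
    (∀ x ∈ q.support, ∀ y ∈ q.support, G.Adj x y → s(x, y) ∈ q.edges) →
    ∀ v, v ∈ p.support ↔ v ∈ q.support := by
  intro n
  induction n with
  | zero =>
    intro a b p q hlen hp hq _ _ v
    have hpnil : p.Nil := by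
      rw [Walk.nil_iff_length_eq]; omega
    have hab : a = b := hpnil.eq
    subst hab
    rw [Walk.isPath_iff_eq_nil.mp hq]
    cases p with
    | nil => rfl
    | cons h p' => simp at hpnil
  | succ n ih =>
    intro a b p q hlen hp hq hip hiq
    cases p with
    | nil =>
      rw [Walk.isPath_iff_eq_nil.mp hq]
      intro v; rfl
    | @cons _ x _ h₁ p' =>
      have hax : a ∉ p'.support := ((Walk.cons_isPath_iff h₁ p').mp hp).2
      have hab : a ≠ b := fun hab => hax (hab ▸ p'.end_mem_support)
      obtain ⟨y, h₂, q', rfl⟩ := Walk.exists_eq_cons_of_ne hab q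
      have hay : a ∉ q'.support := ((Walk.cons_isPath_iff h₂ q').mp hq).2
      have hp' : p'.IsPath := ((Walk.cons_isPath_iff h₁ p').mp hp).1
      have hq' : q'.IsPath := ((Walk.cons_isPath_iff h₂ q').mp hq).1
      by_cases hxy : x = y
      · subst hxy
        have hsupp := ih p' q' (by simpa using Nat.succ_le_succ_iff.mp (by simpa using hlen))
          hp' hq' (induced_tail h₁ p' hp hip) (induced_tail h₂ q' hq hiq)
        intro v
        rw [Walk.support_cons, Walk.support_cons, List.mem_cons, List.mem_cons, hsupp v]
      · exfalso
        obtain ⟨c, r, hcS, hno, hsub, hrpath⟩ :=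
          exists_first_meet p' (fun v => v ∈ (Walk.cons h₂ q').support)
            (Walk.end_mem_support _)
        have hrp : r.IsPath := hrpath hp'
        have hcp' : c ∈ p'.support := hsub c r.end_mem_support
        have hac : a ≠ c := fun h' => hax (h' ▸ hcp')
        have hP1 : (Walk.cons h₁ r).IsPath := by
          rw [Walk.cons_isPath_iff]
          exact ⟨hrp, fun h' => hax (hsub a h')⟩
        set P2 := (Walk.cons h₂ q').takeUntil c hcS with hP2def
        have hP2 : P2.IsPath := hq.takeUntil hcS
        have hdisj : ∀ v, v ∈ (Walk.cons h₁ r).support → v ∈ P2.support → v = a ∨ v = c := by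
          intro v hv1 hv2
          rw [Walk.support_cons, List.mem_cons] at hv1
          rcases hv1 with rfl | hv1
          · exact Or.inl rfl
          · by_contra hcon
            push_neg at hcon
            exact hno v hv1 hcon.2 (Walk.support_takeUntil_subset _ hcS hv2)
        have hadj : G.Adj a c := adj_of_two_disjoint_paths hBG hac _ P2 hP1 hP2 hdisj
        -- c must be the second vertex of p
        have hcx : c = x := by
          have hmem := hip a (Walk.start_mem_support _) c
            (by rw [Walk.support_cons]; exact List.mem_cons_of_mem _ hcp') hadj
          rw [Walk.edges_cons, List.mem_cons] at hmem
          rcases hmem with heq | h'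
          · rw [Sym2.eq_iff] at heq
            rcases heq with ⟨-, h''⟩ | ⟨-, h''⟩
            · exact h''
            · exact absurd h'' hac.symm
          · exact absurd (p'.fst_mem_support_of_mem_edges h') hax
        have hcq : c ∈ q'.support := by
          have := hcS
          rw [Walk.support_cons, List.mem_cons] at this
          rcases this with rfl | h' 
          · exact absurd rfl hac
          · exact h'
        have hcy : c = y := by
          have hmem := hiq a (Walk.start_mem_support _) c
            (by rw [Walk.support_cons]; exact List.mem_cons_of_mem _ hcq) hadj
          rw [Walk.edges_cons, List.mem_cons] at hmem
          rcases hmem with heq | h'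
          · rw [Sym2.eq_iff] at heq
            rcases heq with ⟨-, h''⟩ | ⟨-, h''⟩
            · exact h''
            · exact absurd h'' hac.symm
          · exact absurd (q'.fst_mem_support_of_mem_edges h') hay
        exact hxy (hcx ▸ hcy ▸ rfl)

/-- Reversal of an induced path. -/
private def InducedPath.rev (P : InducedPath G) : InducedPath G where
  first := P.last
  last := P.first
  walk := P.walk.reverse
  isPath := P.isPath.reverse
  induced := by
    intro x hx y hy hxy
    rw [Walk.support_reverse, List.mem_reverse] at hx hy
    rw [Walk.edges_reverse, List.mem_reverse]
    exact P.induced x hx y hy hxy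

private lemma InducedPath.rev_vertexSet (P : InducedPath G) : P.rev.vertexSet = P.vertexSet := by
  ext v
  simp [InducedPath.vertexSet, InducedPath.rev, Walk.support_reverse, List.mem_reverse]

private lemma InducedPath.rev_edgeSet (P : InducedPath G) : P.rev.edgeSet = P.edgeSet := by
  ext e
  simp [InducedPath.edgeSet, InducedPath.rev, Walk.edges_reverse, List.mem_reverse]

private lemma unique_aligned [Finite V] [DecidableEq V] (hBG : IsBlockGraph G)
    (Q R : InducedPath G) (h1 : Q.first = R.first) (h2 : Q.last = R.last) :
    Q.vertexSet = R.vertexSet ∧ Q.edgeSet = R.edgeSet := by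
  obtain ⟨a, b, w, hw, hiw⟩ := Q
  obtain ⟨a', b', w', hw', hiw'⟩ := R
  simp only [InducedPath.vertexSet, InducedPath.edgeSet] at *
  subst h1; subst h2
  have hsupp := induced_support_unique hBG w.length w w' le_rfl hw hw' hiw hiw'
  constructor
  · ext v; exact hsupp v
  · ext e
    simp only [Set.mem_setOf_eq]
    constructor
    · intro he
      induction e with
      | h x y =>
        exact hiw' x ((hsupp x).mp (w.fst_mem_support_of_mem_edges he))
          y ((hsupp y).mp (w.snd_mem_support_of_mem_edges he)) (w.adj_of_mem_edges he)
    · intro he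
      induction e with
      | h x y =>
        exact hiw x ((hsupp x).mpr (w'.fst_mem_support_of_mem_edges he))
          y ((hsupp y).mpr (w'.snd_mem_support_of_mem_edges he)) (w'.adj_of_mem_edges he)

private lemma unique_of_boundary [Finite V] [DecidableEq V] (hBG : IsBlockGraph G)
    (Q R : InducedPath G) (h : ({Q.first, Q.last} : Set V) = {R.first, R.last}) :
    Q.vertexSet = R.vertexSet ∧ Q.edgeSet = R.edgeSet := by
  rcases Set.pair_eq_pair_iff.mp h with ⟨h1, h2⟩ | ⟨h1, h2⟩
  · exact unique_aligned hBG Q R h1 h2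
  · have := unique_aligned hBG Q R.rev (by simpa [InducedPath.rev] using h1)
      (by simpa [InducedPath.rev] using h2)
    rw [InducedPath.rev_vertexSet, InducedPath.rev_edgeSet] at this
    exact this

private lemma range_fin_two {α : Type*} (f : Fin 2 → α) : Set.range f = {f 0, f 1} := by
  ext x
  constructor
  · rintro ⟨i, rfl⟩
    fin_cases i
    · exact Or.inl rfl
    · exact Or.inr rfl
  · rintro (rfl | rfl)
    · exact ⟨0, rfl⟩
    · exact ⟨1, rfl⟩

end AuxProof

/-- **Theorem (Statement 8).** For vertex-disjoint induced oriented paths of a finite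
simple block graph, the directed multigraph `K_{P_ind}` has no loops and no repeated
arcs. -/
theorem blockGraph_K_simple {V : Type*} [Fintype V] [DecidableEq V]
    (G : SimpleGraph V) (hBG : IsBlockGraph G) (ℓ : ℕ) (P : Fin ℓ → InducedPath G)
    (hdisj : PairwiseVertexDisjoint G P) (φ : Fin ℓ → Fin 2 → V)
    (horient : ∀ i, IsOrientation G (P i) (φ i)) :
    (∀ i : Fin ℓ, ¬ KArc G P φ i i) ∧
    (∀ (i j : Fin ℓ) (Q₁ Q₂ : InducedPath G),
      KArcWitness G P φ i j Q₁ → KArcWitness G P φ i j Q₂ →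
      Q₁.vertexSet = Q₂.vertexSet ∧ Q₁.edgeSet = Q₂.edgeSet) := by
  have hfin : Finite V := inferInstance
  have huniq : ∀ Q R : InducedPath G, ({Q.first, Q.last} : Set V) = {R.first, R.last} →
      Q.vertexSet = R.vertexSet ∧ Q.edgeSet = R.edgeSet :=
    fun Q R h => unique_of_boundary hBG Q R h
  constructor
  · rintro i ⟨Q, hQ1, hQ2, hQ3⟩
    have hbd : ({Q.first, Q.last} : Set V) = {(P i).first, (P i).last} := by
      rw [hQ2, ← range_fin_two (φ i), horient i]
      rfl
    obtain ⟨hv, he⟩ := huniq Q (P i) hbd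
    exact hQ3 i ⟨hv.symm.le, he.symm.le⟩
  · intro i j Q₁ Q₂ h₁ h₂
    exact huniq Q₁ Q₂ (h₁.2.1.trans h₂.2.1.symm)
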